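/- Let X be a compact metric space, f : X → X a continuous map, and p ∈ X. Then f is m_p-topologically stable (where m_p is the Dirac measure supported at p) if and only if p is a topologically stable point of f. -/

import Mathlib

open MeasureTheory

/-- `f` is `μ`-topologically stable: for every `ε > 0` there is `δ > 0` such that for every
continuous `g` with `d_{C⁰}(f,g) ≤ δ` there are a compact `g`-invariant set `Y` with
`μ(X \ Y) ≤ ε` and a continuous `h : Y → X` with `d_{C⁰}(h, i_Y) ≤ ε` and `f ∘ h = h ∘ g`. -/
def MuTopStable {X : Type*} [MetricSpace X] [MeasurableSpace X]
    (μ : Measure X) (f : X → X) : Prop :=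
  ∀ ε > 0, ∃ δ > 0, ∀ g : X → X, Continuous g →
    (∀ x, dist (f x) (g x) ≤ δ) →
    ∃ (Y : Set X) (hg : Set.MapsTo g Y Y), IsCompact Y ∧
      μ Yᶜ ≤ ENNReal.ofReal ε ∧
      ∃ h : Y → X, Continuous h ∧ (∀ y : Y, dist (h y) (y : X) ≤ ε) ∧
        ∀ y : Y, f (h y) = h ⟨g y, hg y.2⟩

/-- `p` is a topologically stable point of `f`. -/
def TopStablePoint {X : Type*} [MetricSpace X] (f : X → X) (p : X) : Prop :=
  ∀ ε > 0, ∃ δ > 0, ∀ g : X → X, Continuous g →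
    (∀ x, dist (f x) (g x) ≤ δ) →
    ∃ h : closure {x | ∃ n : ℕ, g^[n] p = x} → X, Continuous h ∧
      (∀ y, dist (h y) (y : X) ≤ ε) ∧
      ∀ (y : closure {x | ∃ n : ℕ, g^[n] p = x})
        (hy : g ↑y ∈ closure {x | ∃ n : ℕ, g^[n] p = x}),
        f (h y) = h ⟨g ↑y, hy⟩

theorem dirac_topologically_stable_iff_topStablePoint
    {X : Type*} [MetricSpace X] [CompactSpace X] [MeasurableSpace X] [BorelSpace X]
    (f : X → X) (hf : Continuous f) (p : X) :
    MuTopStable (Measure.dirac p) f ↔ TopStablePoint f p := by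
  constructor
  · intro H ε hε
    set ε' := min ε (1/2) with hε'def
    have hε' : 0 < ε' := lt_min hε (by norm_num)
    obtain ⟨δ, hδ, hδ'⟩ := H ε' hε'
    refine ⟨δ, hδ, fun g hg hdist => ?_⟩
    obtain ⟨Y, hgY, hYc, hμ, h, hcont, hd, hconj⟩ := hδ' g hg hdist
    have hYclosed : IsClosed Y := hYc.isClosed
    -- p ∈ Y
    have hpY : p ∈ Y := by
      by_contra hpY
      have : (Measure.dirac p) Yᶜ = 1 := by
        rw [Measure.dirac_apply' _ hYclosed.measurableSet.compl]
        simp [hpY]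
      rw [this] at hμ
      have : (1 : ENNReal) ≤ ENNReal.ofReal (1/2) :=
        le_trans hμ (ENNReal.ofReal_le_ofReal (min_le_right _ _))
      rw [ENNReal.one_le_ofReal] at this
      norm_num at this
    -- orbit ⊆ Y
    have horb : {x | ∃ n : ℕ, g^[n] p = x} ⊆ Y := by
      rintro x ⟨n, rfl⟩
      induction n with
      | zero => simpa using hpY
      | succ n ih => rw [Function.iterate_succ_apply']; exact hgY ih
    have hsub : closure {x | ∃ n : ℕ, g^[n] p = x} ⊆ Y :=
      hYclosed.closure_subset_iff.mpr horb
    refine ⟨fun z => h ⟨z.1, hsub z.2⟩, ?_, ?_, ?_⟩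
    · exact hcont.comp (Continuous.subtype_mk continuous_subtype_val _)
    · intro y
      exact le_trans (hd ⟨y.1, hsub y.2⟩) (min_le_left _ _)
    · intro y hy
      exact hconj ⟨y.1, hsub y.2⟩
  · intro H ε hε
    obtain ⟨δ, hδ, hδ'⟩ := H ε hε
    refine ⟨δ, hδ, fun g hg hdist => ?_⟩
    obtain ⟨h, hcont, hd, hconj⟩ := hδ' g hg hdist
    have hmaps : Set.MapsTo g {x | ∃ n : ℕ, g^[n] p = x} {x | ∃ n : ℕ, g^[n] p = x} := by
      rintro x ⟨n, rfl⟩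
      exact ⟨n + 1, (Function.iterate_succ_apply' g n p)⟩
    have hmapsC : Set.MapsTo g (closure {x | ∃ n : ℕ, g^[n] p = x}) (closure {x | ∃ n : ℕ, g^[n] p = x}) :=
      hmaps.closure hg
    have hpS : p ∈ closure {x | ∃ n : ℕ, g^[n] p = x} := subset_closure ⟨0, rfl⟩
    refine ⟨closure {x | ∃ n : ℕ, g^[n] p = x}, hmapsC, isClosed_closure.isCompact, ?_, h, hcont, hd, ?_⟩
    · have : (Measure.dirac p) (closure {x | ∃ n : ℕ, g^[n] p = x})ᶜ = 0 := by
        rw [Measure.dirac_apply' _ isClosed_closure.measurableSet.compl]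
        simp [hpS]
      rw [this]
      exact zero_le
    · intro y
      exact hconj y (hmapsC y.2)
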